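/- Let 𝕋 be a time scale, c ∈ ℝ with c ∉ 𝕋, m a positive natural number, and α ∈ (0,1). Define g : 𝕋 → ℝ by g(t) = 1/(t − c)^m. Then for every t ∈ 𝕋^κ with (t − c)·(σ(t) − c) ≠ 0, the number −(μ(t))^{1−α} · Σ_{ν=0}^{m−1} 1/((σ(t) − c)^{m−ν} (t − c)^{ν+1}) is a fractional derivative of g of order α at t. -/

import Mathlib

open Real Set Classical

/-- Forward jump operator of a time scale, with the convention `σ t = t`
when `{s ∈ T | t < s}` is empty. -/
noncomputable def tsSigma (T : Set ℝ) (t : ℝ) : ℝ :=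
  if ({s | s ∈ T ∧ t < s}).Nonempty then sInf {s | s ∈ T ∧ t < s} else t

/-- Graininess function `μ t = σ t - t`. -/
noncomputable def tsMu (T : Set ℝ) (t : ℝ) : ℝ :=
  tsSigma T t - t

/-- Backward jump operator, with the convention `ρ t = t`
when `{s ∈ T | s < t}` is empty. -/
noncomputable def tsRho (T : Set ℝ) (t : ℝ) : ℝ :=
  if ({s | s ∈ T ∧ s < t}).Nonempty then sSup {s | s ∈ T ∧ s < t} else t

/-- `T^κ`: `T` with its maximum removed if the maximum exists and is
left-scattered; `T` otherwise. -/
def tsKappa (T : Set ℝ) : Set ℝ :=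
  {t | t ∈ T ∧ ¬ (IsGreatest T t ∧ tsRho T t < t)}

/-- `t` is right-scattered when `σ t > t`. -/
def RightScattered (T : Set ℝ) (t : ℝ) : Prop :=
  t < tsSigma T t

/-- `t` is right-dense when `t < sup T` and `σ t = t`. -/
def RightDense (T : Set ℝ) (t : ℝ) : Prop :=
  (∃ s ∈ T, t < s) ∧ tsSigma T t = t

/-- Signed real power `x^α = sign(x) · |x|^α` (agrees with `rpow` for `x ≥ 0`). -/
noncomputable def fpow (α x : ℝ) : ℝ := Real.sign x * |x| ^ α

/-- `α = 1/q` for some odd natural number `q`. -/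
def IsOddRecip (α : ℝ) : Prop := ∃ q : ℕ, Odd q ∧ α = 1 / (q : ℝ)

/-- `L` is a fractional derivative of `f` of order `α` at `t` on the time scale `T`. -/
def FracDerivAt (T : Set ℝ) (f : ℝ → ℝ) (α t L : ℝ) : Prop :=
  (IsOddRecip α →
    ∀ ε > (0:ℝ), ∃ δ > (0:ℝ), ∀ s ∈ T, |t - s| < δ →
      |(f (tsSigma T t) - f s) - L * fpow α (tsSigma T t - s)|
        ≤ ε * |tsSigma T t - s| ^ α) ∧
  (¬ IsOddRecip α →
    ∀ ε > (0:ℝ), ∃ δ > (0:ℝ), ∀ s ∈ T, t - δ < s → s < t →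
      |(f (tsSigma T t) - f s) - L * fpow α (tsSigma T t - s)|
        ≤ ε * |tsSigma T t - s| ^ α)

/-- Continuity at `t` of `f` as a function on the time scale `T`. -/
def ContinuousAtTS (T : Set ℝ) (f : ℝ → ℝ) (t : ℝ) : Prop :=
  ∀ ε > (0:ℝ), ∃ δ > (0:ℝ), ∀ s ∈ T, |t - s| < δ → |f t - f s| ≤ ε

lemma key_id (m : ℕ) (a b : ℝ) (ha : a ≠ 0) (hb : b ≠ 0) :
    1/a^m - 1/b^m = -((a - b) * ∑ ν ∈ Finset.range m, 1/(a^(m-ν) * b^(ν+1))) := by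
  induction m with
  | zero => simp
  | succ m ih =>
    rw [Finset.sum_range_succ]
    have h1 : ∀ ν ∈ Finset.range m, (1:ℝ)/(a^(m+1-ν) * b^(ν+1))
        = (1/a) * (1/(a^(m-ν) * b^(ν+1))) := by
      intro ν hν
      rw [Finset.mem_range] at hν
      rw [show m+1-ν = (m-ν)+1 by omega, pow_succ]
      field_simp
    rw [Finset.sum_congr rfl h1, ← Finset.mul_sum]
    rcases eq_or_ne a b with h | h
    · subst h
      simp only [show m+1-m = 1 by omega]
      field_simp
      ring
    · have hab : a - b ≠ 0 := sub_ne_zero.mpr h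
      have h2 : ∑ ν ∈ Finset.range m, (1:ℝ)/(a^(m-ν) * b^(ν+1))
          = -(1/a^m - 1/b^m) / (a - b) := by
        rw [ih, neg_neg]
        exact (mul_div_cancel_left₀ _ hab).symm
      rw [h2]
      simp only [show m+1-m = 1 by omega]
      have hpa : a^m ≠ 0 := pow_ne_zero _ ha
      have hpb : b^m ≠ 0 := pow_ne_zero _ hb
      field_simp
      ring

lemma ts_le_sigma (T : Set ℝ) (t : ℝ) : t ≤ tsSigma T t := by
  unfold tsSigma
  split_ifs with h
  · exact le_csInf h fun s hs => hs.2.le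
  · exact le_refl t

/-- Fractional derivative of `g(t) = 1/(t - c)^m` on a time scale, provided
`(t - c)(σ t - c) ≠ 0`:
`g^(α)(t) = -(μ t)^(1-α) · Σ_{ν=0}^{m-1} 1/((σ t - c)^(m-ν) (t - c)^(ν+1))`. -/
theorem fracDeriv_inv_pow
    (T : Set ℝ) (hT : T.Nonempty) (hTc : IsClosed T)
    (c : ℝ) (hc : c ∉ T) (m : ℕ) (hm : 0 < m) (α : ℝ) (hα : α ∈ Set.Ioo (0:ℝ) 1)
    (t : ℝ) (ht : t ∈ tsKappa T)
    (hne : (t - c) * (tsSigma T t - c) ≠ 0) :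
    FracDerivAt T (fun s => 1 / (s - c) ^ m) α t
      (-((tsMu T t) ^ (1 - α) *
        ∑ ν ∈ Finset.range m,
          1 / ((tsSigma T t - c) ^ (m - ν) * (t - c) ^ (ν + 1)))) := by
  obtain ⟨hα0, hα1⟩ := hα
  have h1α : (0:ℝ) < 1 - α := by linarith
  set σ := tsSigma T t with hσdef
  have htc : t - c ≠ 0 := (mul_ne_zero_iff.mp hne).1
  have hσc : σ - c ≠ 0 := (mul_ne_zero_iff.mp hne).2
  set S := ∑ ν ∈ Finset.range m, 1 / ((σ - c) ^ (m - ν) * (t - c) ^ (ν + 1)) with hS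
  set L := -((tsMu T t) ^ (1 - α) * S) with hL
  suffices key : ∀ ε > (0:ℝ), ∃ δ > (0:ℝ), ∀ s ∈ T, |t - s| < δ →
      |(1/(σ - c)^m - 1/(s - c)^m) - L * fpow α (σ - s)| ≤ ε * |σ - s| ^ α by
    constructor
    · intro _; exact key
    · intro _ ε hε
      obtain ⟨δ, hδ, H⟩ := key ε hε
      exact ⟨δ, hδ, fun s hs h1 h2 =>
        H s hs (by rw [abs_sub_lt_iff]; constructor <;> linarith)⟩
  intro ε hε
  have hsne : ∀ s ∈ T, s - c ≠ 0 := fun s hs =>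
    sub_ne_zero.mpr (fun h => hc (h ▸ hs))
  rcases eq_or_lt_of_le (ts_le_sigma T t) with hEq | hlt
  · -- right-dense / max case : σ = t
    have hμ : tsMu T t = 0 := by
      have h' : tsMu T t = tsSigma T t - t := rfl
      rw [h', ← hEq]; ring
    have hL0 : L = 0 := by rw [hL, hμ, Real.zero_rpow (ne_of_gt h1α)]; ring
    set F : ℝ → ℝ := fun s => ∑ ν ∈ Finset.range m, 1/((t - c)^(m-ν) * (s - c)^(ν+1)) with hF
    have hFc : ContinuousAt F t := by
      apply tendsto_finset_sum
      intro ν _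
      exact ContinuousAt.div continuousAt_const
        (continuousAt_const.mul ((continuousAt_id.sub continuousAt_const).pow _))
        (mul_ne_zero (pow_ne_zero _ htc) (pow_ne_zero _ htc))
    have hφ : ContinuousAt (fun s => |t - s| ^ (1-α) * |F s|) t := by
      apply ContinuousAt.mul
      · exact ContinuousAt.rpow_const (continuousAt_const.sub continuousAt_id).abs (Or.inr h1α.le)
      · exact hFc.abs
    obtain ⟨δ, hδ, hball⟩ := Metric.continuousAt_iff.mp hφ ε hε
    refine ⟨δ, hδ, fun s hs hts => ?_⟩
    rw [hL0, zero_mul, sub_zero, show σ = t from hσdef.trans hEq.symm]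
    rcases eq_or_ne s t with rfl | hst
    · simp [Real.zero_rpow (ne_of_gt hα0)]
    · have hpos : 0 < |t - s| := abs_pos.mpr (sub_ne_zero.mpr (Ne.symm hst))
      have hkey := key_id m (t - c) (s - c) htc (hsne s hs)
      rw [show (t - c) - (s - c) = t - s by ring] at hkey
      have hballs := hball (show dist s t < δ by rw [Real.dist_eq, abs_sub_comm]; exact hts)
      rw [Real.dist_eq] at hballs
      have hφt : |t - t| ^ (1-α) * |F t| = 0 := by
        simp [Real.zero_rpow (ne_of_gt h1α)]
      rw [hφt, sub_zero] at hballs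
      have hφs : |t - s| ^ (1-α) * |F s| ≤ ε := by
        calc |t - s| ^ (1-α) * |F s| ≤ |(|t - s| ^ (1-α) * |F s|)| := le_abs_self _
          _ ≤ ε := hballs.le
      calc |1/(t-c)^m - 1/(s-c)^m|
          = |t - s| * |F s| := by rw [hkey, abs_neg, abs_mul]
        _ = |t-s|^α * (|t-s|^(1-α) * |F s|) := by
            rw [← mul_assoc, ← Real.rpow_add hpos, show α + (1-α) = 1 by ring, Real.rpow_one]
        _ ≤ |t-s|^α * ε :=
            mul_le_mul_of_nonneg_left hφs (Real.rpow_nonneg (abs_nonneg _) _)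
        _ = ε * |t - s|^α := mul_comm _ _
  · -- right-scattered case : t < σ
    have hμpos : 0 < σ - t := sub_pos.mpr hlt
    set F : ℝ → ℝ := fun s => ∑ ν ∈ Finset.range m, 1/((σ - c)^(m-ν) * (s - c)^(ν+1)) with hF
    have hFc : ContinuousAt F t := by
      apply tendsto_finset_sum
      intro ν _
      exact ContinuousAt.div continuousAt_const
        (continuousAt_const.mul ((continuousAt_id.sub continuousAt_const).pow _))
        (mul_ne_zero (pow_ne_zero _ hσc) (pow_ne_zero _ htc))
    have hGc : ContinuousAt (fun s => (σ - s)^(1-α) * F s) t := by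
      apply ContinuousAt.mul
      · exact ContinuousAt.rpow_const (continuousAt_const.sub continuousAt_id)
          (Or.inl (ne_of_gt hμpos))
      · exact hFc
    have hGt : (σ - t)^(1-α) * F t = (tsMu T t) ^ (1-α) * S := rfl
    obtain ⟨δ₀, hδ₀, hball⟩ := Metric.continuousAt_iff.mp hGc ε hε
    refine ⟨min δ₀ (σ - t), lt_min hδ₀ hμpos, fun s hs hts => ?_⟩
    have h1 : |t - s| < δ₀ := lt_of_lt_of_le hts (min_le_left _ _)
    have h2 : |t - s| < σ - t := lt_of_lt_of_le hts (min_le_right _ _)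
    have hσs : 0 < σ - s := by
      have := abs_lt.mp h2; linarith [this.1, this.2]
    have hfp : fpow α (σ - s) = (σ - s)^α := by
      rw [fpow, Real.sign_of_pos hσs, abs_of_pos hσs, one_mul]
    have hkey := key_id m (σ - c) (s - c) hσc (hsne s hs)
    rw [show (σ - c) - (s - c) = σ - s by ring] at hkey
    have hsplit : σ - s = (σ-s)^α * (σ-s)^(1-α) := by
      rw [← Real.rpow_add hσs, show α + (1-α) = 1 by ring, Real.rpow_one]
    have hGdist : |((tsMu T t)^(1-α) * S) - (σ-s)^(1-α) * F s| < ε := by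
      have hb := hball (show dist s t < δ₀ by rw [Real.dist_eq, abs_sub_comm]; exact h1)
      rw [Real.dist_eq, hGt] at hb
      rw [abs_sub_comm]
      exact hb
    have hmain : (1/(σ - c)^m - 1/(s - c)^m) - L * fpow α (σ - s)
        = (σ-s)^α * (((tsMu T t)^(1-α) * S) - (σ-s)^(1-α) * F s) := by
      rw [hkey, hfp, hL]
      linear_combination (-(F s)) * hsplit
    calc |(1/(σ - c)^m - 1/(s - c)^m) - L * fpow α (σ - s)|
        = (σ-s)^α * |((tsMu T t)^(1-α) * S) - (σ-s)^(1-α) * F s| := by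
          rw [hmain, abs_mul, abs_of_nonneg (Real.rpow_nonneg hσs.le _)]
      _ ≤ (σ-s)^α * ε :=
          mul_le_mul_of_nonneg_left hGdist.le (Real.rpow_nonneg hσs.le _)
      _ = ε * |σ - s|^α := by rw [abs_of_pos hσs]; ring
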